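/- Let G be a simple, 3-edge-connected graph with gon(G) = 3, let D be an effective divisor on G with deg(D) = 3 and r(D) = 1, and for each vertex v let D_v be the unique effective divisor equivalent to D with v in its support. If e = uv ∈ E(G) is an edge with [u]_D ≠ [v]_D, then there are exactly three edges between the vertices of [u]_D and the vertices of [v]_D; moreover, for each vertex u′ ∈ [u]_D, the number of edges between u′ and [v]_D equals D_{u′}(u′). -/

import Mathlib

/-- A finite loopless multigraph: a finite vertex type, a finite edge type,
and an assignment of an unordered pair of distinct endpoints to each edge. -/
structure Multigraph where
  V : Type
  E : Type
  [fintypeV : Fintype V]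
  [fintypeE : Fintype E]
  [decEqV : DecidableEq V]
  ends : E → Sym2 V
  loopless : ∀ e, ¬ (ends e).IsDiag

attribute [instance] Multigraph.fintypeV Multigraph.fintypeE Multigraph.decEqV

namespace Multigraph

/-- The graph obtained by deleting the edges in `W` is connected (finite graphs are
connected iff the vertex set is nonempty and every nonempty proper vertex subset
has an edge leaving it). -/
def ConnectedWithout (G : Multigraph) (W : Set G.E) : Prop :=
  Nonempty G.V ∧
    ∀ A : Finset G.V, A.Nonempty → A ≠ Finset.univ →
      ∃ e, e ∉ W ∧ ∃ u v, G.ends e = s(u, v) ∧ u ∈ A ∧ v ∉ A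

/-- `G` is connected. -/
def Connected (G : Multigraph) : Prop := G.ConnectedWithout ∅

/-- `G` is `k`-edge-connected: deleting any set of at most `k - 1` edges
leaves a connected graph. -/
def EdgeConnected (G : Multigraph) (k : ℕ) : Prop :=
  ∀ W : Finset G.E, W.card < k → G.ConnectedWithout ↑W

/-- An edge is a bridge if deleting it disconnects the graph. -/
def IsBridge (G : Multigraph) (e : G.E) : Prop := ¬ G.ConnectedWithout {e}

/-- The graph obtained by deleting the vertices in `U` (and all incident edges)
is connected. -/
def ConnectedAvoiding (G : Multigraph) (U : Set G.V) : Prop :=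
  (∃ v, v ∉ U) ∧
    ∀ A : Finset G.V, A.Nonempty → (∀ a ∈ A, a ∉ U) → (∃ w, w ∉ U ∧ w ∉ A) →
      ∃ e u v, G.ends e = s(u, v) ∧ u ∈ A ∧ v ∉ A ∧ v ∉ U

/-- `G` is `k`-vertex-connected: deleting any set of at most `k - 1` vertices
leaves a connected graph. -/
def VertexConnected (G : Multigraph) (k : ℕ) : Prop :=
  ∀ U : Finset G.V, U.card < k → G.ConnectedAvoiding ↑U

/-- `G` is simple: no two distinct edges have the same pair of endpoints. -/
def Simple (G : Multigraph) : Prop :=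
  ∀ e e' : G.E, G.ends e = G.ends e' → e = e'

/-- The genus `g(G) = |E| - |V| + 1`. -/
def genus (G : Multigraph) : ℤ :=
  (Fintype.card G.E : ℤ) - (Fintype.card G.V : ℤ) + 1

/-- A tree is a connected graph of genus 0. -/
def IsTree (G : Multigraph) : Prop := G.Connected ∧ G.genus = 0

/-- The number of edges joining `u` and `v`. -/
noncomputable def numEdges (G : Multigraph) (u v : G.V) : ℕ :=
  Set.ncard {e : G.E | G.ends e = s(u, v)}

/-- The valence of a vertex: the number of incident edges. -/
noncomputable def valence (G : Multigraph) (v : G.V) : ℕ :=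
  Set.ncard {e : G.E | v ∈ G.ends e}

/-- A divisor on `G`: an element of the free abelian group on `V(G)`. -/
abbrev Divisor (G : Multigraph) : Type := G.V → ℤ

/-- The degree of a divisor: the sum of its coefficients. -/
def degree (G : Multigraph) (D : G.Divisor) : ℤ := ∑ v, D v

/-- A divisor is effective if all its coefficients are nonnegative. -/
def Effective (G : Multigraph) (D : G.Divisor) : Prop := ∀ v, 0 ≤ D v

/-- The Laplacian of `G` applied to an integer vector `f`. -/
noncomputable def laplacian (G : Multigraph) (f : G.V → ℤ) : G.Divisor :=
  fun v => ∑ w, (G.numEdges v w : ℤ) * (f v - f w)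

/-- Linear equivalence of divisors: the difference is in the image of the Laplacian. -/
def LinEquiv (G : Multigraph) (D D' : G.Divisor) : Prop :=
  ∃ f : G.V → ℤ, D - D' = G.laplacian f

/-- `D - F` is equivalent to an effective divisor for every effective `F` of degree `k`. -/
def RankGe (G : Multigraph) (D : G.Divisor) (k : ℤ) : Prop :=
  ∀ F : G.Divisor, G.Effective F → G.degree F = k →
    ∃ E' : G.Divisor, G.Effective E' ∧ G.LinEquiv (D - F) E'

/-- The Baker–Norine rank of a divisor. -/
noncomputable def rank (G : Multigraph) (D : G.Divisor) : ℤ :=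
  sSup {r : ℤ | r = -1 ∨ (0 ≤ r ∧ G.RankGe D r)}

/-- The (divisorial) gonality of `G`: the minimum degree of an effective divisor
of rank at least 1. -/
noncomputable def gonality (G : Multigraph) : ℕ :=
  sInf {n : ℕ | ∃ D : G.Divisor, G.Effective D ∧ G.degree D = (n : ℤ) ∧ 1 ≤ G.rank D}

end Multigraph

/-- A morphism of multigraphs: vertices map to vertices, and each edge maps either
to an edge joining the images of its endpoints (if they are distinct) or to the
common image of its endpoints. -/
structure Morphism (G G' : Multigraph) where
  vertexMap : G.V → G'.V
  edgeMap : G.E → G'.E ⊕ G'.V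
  map_edge_of_eq : ∀ e u v, G.ends e = s(u, v) → vertexMap u = vertexMap v →
    edgeMap e = Sum.inr (vertexMap u)
  map_edge_of_ne : ∀ e u v, G.ends e = s(u, v) → vertexMap u ≠ vertexMap v →
    ∃ e', edgeMap e = Sum.inl e' ∧ G'.ends e' = s(vertexMap u, vertexMap v)

namespace Morphism

variable {G G' : Multigraph}

/-- The multiplicity `m_φ(v)` of `φ` at `v` with respect to an edge `e'` of `G'`. -/
noncomputable def mult (φ : Morphism G G') (v : G.V) (e' : G'.E) : ℕ :=
  Set.ncard {e : G.E | v ∈ G.ends e ∧ φ.edgeMap e = Sum.inl e'}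

/-- `φ` is harmonic if `m_φ(v)` does not depend on the chosen edge `e'`
incident to `φ(v)`. -/
def Harmonic (φ : Morphism G G') : Prop :=
  ∀ (v : G.V) (e₁ e₂ : G'.E),
    φ.vertexMap v ∈ G'.ends e₁ → φ.vertexMap v ∈ G'.ends e₂ →
      φ.mult v e₁ = φ.mult v e₂

/-- `φ` is non-degenerate if `m_φ(v) > 0` for every vertex `v`. -/
def Nondegenerate (φ : Morphism G G') : Prop :=
  ∀ (v : G.V) (e' : G'.E), φ.vertexMap v ∈ G'.ends e' → 0 < φ.mult v e'

/-- `φ` has degree `d`: every edge of `G'` has exactly `d` preimages. -/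
def HasDegree (φ : Morphism G G') (d : ℕ) : Prop :=
  Nonempty G'.E ∧ ∀ e' : G'.E, Set.ncard {e : G.E | φ.edgeMap e = Sum.inl e'} = d

end Morphism
namespace Multigraph
variable (G : Multigraph)

lemma ncard_setOf_eq_card_filter {α : Type} [Fintype α] (p : α → Prop) [DecidablePred p] :
    {x | p x}.ncard = (Finset.univ.filter p).card := by
  rw [← Set.toFinset_setOf, Set.ncard_eq_toFinset_card']

lemma numEdges_comm (a b : G.V) : G.numEdges a b = G.numEdges b a := by
  unfold numEdges
  rw [Sym2.eq_swap]

lemma numEdges_pos {G : Multigraph} {a b : G.V} {e : G.E} (h : G.ends e = s(a, b)) :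
    0 < G.numEdges a b := by
  rw [numEdges, Set.ncard_pos (Set.toFinite _)]
  exact ⟨e, h⟩

lemma lap_sub (f g : G.V → ℤ) : G.laplacian (f - g) = G.laplacian f - G.laplacian g := by
  funext x
  simp only [laplacian, Pi.sub_apply, ← Finset.sum_sub_distrib]
  exact Finset.sum_congr rfl fun w _ => by ring

lemma lap_add (f g : G.V → ℤ) : G.laplacian (f + g) = G.laplacian f + G.laplacian g := by
  funext x
  simp only [laplacian, Pi.add_apply, ← Finset.sum_add_distrib]
  exact Finset.sum_congr rfl fun w _ => by ring

lemma degree_lap (f : G.V → ℤ) : G.degree (G.laplacian f) = 0 := by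
  unfold degree laplacian
  have h : ∀ v w : G.V, (G.numEdges v w : ℤ) * (f v - f w)
      = (G.numEdges v w : ℤ) * f v - (G.numEdges w v : ℤ) * f w := by
    intro v w
    rw [numEdges_comm]
    ring
  simp_rw [h, Finset.sum_sub_distrib]
  rw [sub_eq_zero, Finset.sum_comm]

lemma ncard_edges_to (x : G.V) (B : Finset G.V) (hx : x ∉ B) :
    {e : G.E | ∃ b ∈ B, G.ends e = s(x, b)}.ncard = ∑ b ∈ B, G.numEdges x b := by
  classical
  revert hx
  induction B using Finset.induction_on with
  | empty => simp
  | @insert b B hb ih =>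
    intro hx
    have hxb : x ≠ b := fun h => hx (h ▸ Finset.mem_insert_self b B)
    have hxB : x ∉ B := fun h => hx (Finset.mem_insert_of_mem h)
    have hset : {e : G.E | ∃ c ∈ insert b B, G.ends e = s(x, c)} =
        {e : G.E | G.ends e = s(x, b)} ∪ {e : G.E | ∃ c ∈ B, G.ends e = s(x, c)} := by
      ext e1
      constructor
      · rintro ⟨c, hc, hc2⟩
        rcases Finset.mem_insert.mp hc with rfl | hc
        · exact Or.inl hc2
        · exact Or.inr ⟨c, hc, hc2⟩
      · rintro (h | ⟨c, hc, hc2⟩)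
        · exact ⟨b, Finset.mem_insert_self b B, h⟩
        · exact ⟨c, Finset.mem_insert_of_mem hc, hc2⟩
    have hdisj : Disjoint {e : G.E | G.ends e = s(x, b)} {e : G.E | ∃ c ∈ B, G.ends e = s(x, c)} := by
      rw [Set.disjoint_left]
      rintro e1 h1 ⟨c, hc, h2⟩
      rw [h1, Sym2.eq_iff] at h2
      rcases h2 with ⟨-, rfl⟩ | ⟨hxc, -⟩
      · exact hb hc
      · exact hxB (hxc ▸ hc)
    rw [hset, Set.ncard_union_eq hdisj (Set.toFinite _) (Set.toFinite _),
      Finset.sum_insert hb, ih hxB]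
    rfl

lemma ncard_edges_between (A B : Finset G.V) (hAB : Disjoint A B) :
    {e : G.E | ∃ a ∈ A, ∃ b ∈ B, G.ends e = s(a, b)}.ncard
      = ∑ a ∈ A, ∑ b ∈ B, G.numEdges a b := by
  classical
  revert hAB
  induction A using Finset.induction_on with
  | empty => simp
  | @insert a A ha ih =>
    intro hAB
    have haB : a ∉ B := fun h => (Finset.disjoint_left.mp hAB (Finset.mem_insert_self a A)) h
    have hAB' : Disjoint A B := hAB.mono_left (Finset.subset_insert a A)
    have hset : {e : G.E | ∃ a' ∈ insert a A, ∃ b ∈ B, G.ends e = s(a', b)} =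
        {e : G.E | ∃ b ∈ B, G.ends e = s(a, b)} ∪ {e : G.E | ∃ a' ∈ A, ∃ b ∈ B, G.ends e = s(a', b)} := by
      ext e1
      constructor
      · rintro ⟨c, hc, b, hb, h⟩
        rcases Finset.mem_insert.mp hc with rfl | hc
        · exact Or.inl ⟨b, hb, h⟩
        · exact Or.inr ⟨c, hc, b, hb, h⟩
      · rintro (⟨b, hb, h⟩ | ⟨c, hc, b, hb, h⟩)
        · exact ⟨a, Finset.mem_insert_self a A, b, hb, h⟩
        · exact ⟨c, Finset.mem_insert_of_mem hc, b, hb, h⟩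
    have hdisj : Disjoint {e : G.E | ∃ b ∈ B, G.ends e = s(a, b)}
        {e : G.E | ∃ a' ∈ A, ∃ b ∈ B, G.ends e = s(a', b)} := by
      rw [Set.disjoint_left]
      rintro e1 ⟨b, hb, h1⟩ ⟨a', ha', b', hb', h2⟩
      rw [h1, Sym2.eq_iff] at h2
      rcases h2 with ⟨h3, rfl⟩ | ⟨h3, h4⟩
      · exact ha (h3 ▸ ha')
      · exact haB (h3 ▸ hb')
    rw [hset, Set.ncard_union_eq hdisj (Set.toFinite _) (Set.toFinite _),
      Finset.sum_insert ha, ih hAB', ncard_edges_to G a B haB]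

end Multigraph

/-- Let `G` be simple, 3-edge-connected with `gon(G) = 3`, let `D` be
effective of degree 3 and rank 1, and for each vertex `v` let `Dv v` be the unique
effective divisor equivalent to `D` with `v` in its support (so the class `[v]_D` is
the support `{w | 0 < Dv v w}` of `Dv v`). If `e = uv` is an edge with `[u]_D ≠ [v]_D`,
then there are exactly three edges between `[u]_D` and `[v]_D`, and for each
`u' ∈ [u]_D` the number of edges between `u'` and `[v]_D` equals `D_{u'}(u')`. -/
theorem stmt_3 (G : Multigraph) (hG : G.Connected) (hs : G.Simple)
    (h3 : G.EdgeConnected 3) (hgon : G.gonality = 3)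
    (D : G.Divisor) (hD : G.Effective D) (hdeg : G.degree D = 3) (hrank : G.rank D = 1)
    (Dv : G.V → G.Divisor)
    (hDv : ∀ v : G.V, G.Effective (Dv v) ∧ G.LinEquiv D (Dv v) ∧ 0 < Dv v v)
    (hDvUnique : ∀ (v : G.V) (D' : G.Divisor),
      G.Effective D' → G.LinEquiv D D' → 0 < D' v → D' = Dv v)
    (e : G.E) (u v : G.V) (he : G.ends e = s(u, v))
    (hne : {w : G.V | 0 < Dv u w} ≠ {w : G.V | 0 < Dv v w}) :
    Set.ncard {e' : G.E | ∃ a b, G.ends e' = s(a, b) ∧ 0 < Dv u a ∧ 0 < Dv v b} = 3 ∧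
      ∀ u' : G.V, 0 < Dv u u' →
        (Set.ncard {e' : G.E | ∃ b, G.ends e' = s(u', b) ∧ 0 < Dv v b} : ℤ)
          = Dv u' u' := by
  classical
  obtain ⟨hDuEff, ⟨f1, hf1⟩, hDuu⟩ := hDv u
  obtain ⟨hDwEff, ⟨f2, hf2⟩, hDwv⟩ := hDv v
  set Du := Dv u with hDu
  set Dw := Dv v with hDw
  set f : G.V → ℤ := f2 - f1 with hf
  have hlapf : ∀ x, Du x - Dw x = ∑ w, (G.numEdges x w : ℤ) * (f x - f w) := by
    have h1 : Du - Dw = G.laplacian f := by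
      rw [hf, Multigraph.lap_sub, ← hf1, ← hf2]
      funext x
      simp only [Pi.sub_apply]
      ring
    intro x
    have := congrFun h1 x
    simpa [Multigraph.laplacian] using this
  set A : Finset G.V := Finset.univ.filter (fun x => ∀ y, f y ≤ f x) with hA
  have hAmem : ∀ x, x ∈ A ↔ ∀ y, f y ≤ f x := by
    intro x; simp [hA]
  have hAne : A.Nonempty := by
    obtain ⟨x, -, hx⟩ := Finset.exists_max_image Finset.univ f ⟨u, Finset.mem_univ u⟩
    exact ⟨x, (hAmem x).mpr fun y => hx y (Finset.mem_univ y)⟩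
  have hAneuniv : A ≠ Finset.univ := by
    intro hAu
    apply hne
    have hDuDw : Du = Dw := by
      funext x
      have hx := (hAmem x).mp (hAu ▸ Finset.mem_univ x)
      have h0 : ∀ w : G.V, (G.numEdges x w : ℤ) * (f x - f w) = 0 := by
        intro w
        have hw := (hAmem w).mp (hAu ▸ Finset.mem_univ w)
        have : f x = f w := le_antisymm (hw x) (hx w)
        rw [this]; ring
      have := hlapf x
      rw [Finset.sum_congr rfl fun w _ => h0 w, Finset.sum_const, smul_zero] at this
      linarith
    show {w : G.V | 0 < Du w} = {w : G.V | 0 < Dw w}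
    rw [hDuDw]
  -- the key inequality at maximal vertices
  set out : G.V → ℤ := fun x => ∑ w ∈ Aᶜ, (G.numEdges x w : ℤ) with hout
  set inn : G.V → ℤ := fun x => ∑ w ∈ A, (G.numEdges x w : ℤ) with hinn
  have hkey : ∀ x ∈ A, out x ≤ Du x - Dw x := by
    intro x hx
    have hxmax := (hAmem x).mp hx
    rw [hlapf x]
    calc out x ≤ ∑ w ∈ Aᶜ, (G.numEdges x w : ℤ) * (f x - f w) := by
          apply Finset.sum_le_sum
          intro w hw
          have hwA : w ∉ A := Finset.mem_compl.mp hw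
          have : ∃ y, f w < f y := by
            by_contra hc
            push_neg at hc
            exact hwA ((hAmem w).mpr hc)
          obtain ⟨y, hy⟩ := this
          have h1 : 1 ≤ f x - f w := by
            have := hxmax y
            omega
          have h2 : (0:ℤ) ≤ (G.numEdges x w : ℤ) := Int.natCast_nonneg _
          nlinarith
      _ ≤ ∑ w, (G.numEdges x w : ℤ) * (f x - f w) := by
          apply Finset.sum_le_sum_of_subset_of_nonneg (Finset.subset_univ _)
          intro w _ _
          have h2 : (0:ℤ) ≤ (G.numEdges x w : ℤ) := Int.natCast_nonneg _
          have := hxmax w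
          nlinarith
  -- the cut has at least three edges
  set p : G.E → Prop := fun e' => ∃ a ∈ A, ∃ b ∈ Aᶜ, G.ends e' = s(a, b) with hp
  have hcut_card : {e' | p e'}.ncard = ∑ a ∈ A, ∑ b ∈ Aᶜ, G.numEdges a b :=
    Multigraph.ncard_edges_between G A Aᶜ disjoint_compl_right
  have h3le : 3 ≤ {e' | p e'}.ncard := by
    by_contra hlt
    push_neg at hlt
    set W : Finset G.E := Finset.univ.filter p with hW
    have hWcard : W.card = {e' | p e'}.ncard :=
      (Multigraph.ncard_setOf_eq_card_filter p).symm
    obtain ⟨-, hconn⟩ := h3 W (by omega)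
    obtain ⟨e0, he0, a, b, hab, haA, hbA⟩ := hconn A hAne hAneuniv
    apply he0
    have hpe0 : p e0 := ⟨a, haA, b, Finset.mem_compl.mpr hbA, hab⟩
    simp [hW, hpe0]
  -- degree of Du is 3
  have hdegDu : ∑ x, Du x = 3 := by
    have h0 : G.degree (G.laplacian f1) = 0 := Multigraph.degree_lap G f1
    have h1 : G.degree (D - Du) = 0 := by rw [hf1]; exact h0
    have h2 : G.degree D - G.degree Du = 0 := by
      rw [← h1]
      simp [Multigraph.degree, Finset.sum_sub_distrib]
    have : G.degree Du = 3 := by rw [hdeg] at h2; linarith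
    simpa [Multigraph.degree] using this
  -- the sandwich
  have hScast : (({e' | p e'}.ncard : ℤ)) = ∑ a ∈ A, out a := by
    rw [hcut_card, hout]
    push_cast
    rfl
  have hSge3 : (3:ℤ) ≤ ∑ a ∈ A, out a := by
    rw [← hScast]
    exact_mod_cast h3le
  have hsum1 : ∑ x ∈ A, out x ≤ ∑ x ∈ A, (Du x - Dw x) := Finset.sum_le_sum hkey
  have hsum2 : ∑ x ∈ A, (Du x - Dw x) = ∑ x ∈ A, Du x - ∑ x ∈ A, Dw x :=
    Finset.sum_sub_distrib Du Dw
  have hDuA3 : ∑ x ∈ A, Du x ≤ 3 := by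
    rw [← hdegDu]
    exact Finset.sum_le_sum_of_subset_of_nonneg (Finset.subset_univ _)
      fun i _ _ => hDuEff i
  have hDwAnn : 0 ≤ ∑ x ∈ A, Dw x := Finset.sum_nonneg fun i _ => hDwEff i
  have hS3 : ∑ a ∈ A, out a = 3 := by linarith
  have hDwA0 : ∑ x ∈ A, Dw x = 0 := by linarith
  have hDuAeq : ∑ x ∈ A, Du x = 3 := by linarith
  have hDwA : ∀ x ∈ A, Dw x = 0 :=
    (Finset.sum_eq_zero_iff_of_nonneg fun x _ => hDwEff x).mp hDwA0
  have hDuEq : ∀ x ∈ A, Du x = out x := by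
    have h0 : ∑ x ∈ A, (Du x - Dw x - out x) = 0 := by
      rw [Finset.sum_sub_distrib, hsum2]
      linarith
    have h1 := (Finset.sum_eq_zero_iff_of_nonneg
      fun x hx => sub_nonneg.mpr (hkey x hx)).mp h0
    intro x hx
    have := h1 x hx
    have := hDwA x hx
    linarith
  have hDuoffA : ∀ y, y ∉ A → Du y = 0 := by
    have hsplit : ∑ x ∈ A, Du x + ∑ x ∈ Aᶜ, Du x = ∑ x, Du x :=
      Finset.sum_add_sum_compl A Du
    have h0 : ∑ x ∈ Aᶜ, Du x = 0 := by
      rw [hdegDu] at hsplit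
      linarith
    have h1 := (Finset.sum_eq_zero_iff_of_nonneg fun x _ => hDuEff x).mp h0
    intro y hy
    exact h1 y (Finset.mem_compl.mpr hy)
  have hvA : v ∉ A := fun h => by
    have := hDwA v h
    omega
  have huA : u ∈ A := by
    by_contra h
    have := hDuoffA u h
    omega
  -- fire A once: the result is Dw
  set g : G.V → ℤ := fun x => if x ∈ A then (1:ℤ) else 0 with hg
  have hlapgA : ∀ x ∈ A, G.laplacian g x = out x := by
    intro x hx
    simp only [Multigraph.laplacian]
    have hterm : ∀ w : G.V, (G.numEdges x w : ℤ) * (g x - g w)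
        = if w ∈ Aᶜ then (G.numEdges x w : ℤ) else 0 := by
      intro w
      by_cases hw : w ∈ A <;> simp [hg, hx, hw, Finset.mem_compl]
    rw [Finset.sum_congr rfl fun w _ => hterm w, Finset.sum_ite_mem,
      Finset.univ_inter]
  have hlapgnA : ∀ y, y ∉ A → G.laplacian g y = -(inn y) := by
    intro y hy
    simp only [Multigraph.laplacian]
    have hterm : ∀ w : G.V, (G.numEdges y w : ℤ) * (g y - g w)
        = if w ∈ A then -(G.numEdges y w : ℤ) else 0 := by
      intro w
      by_cases hw : w ∈ A <;> simp [hg, hy, hw]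
    rw [Finset.sum_congr rfl fun w _ => hterm w, Finset.sum_ite_mem,
      Finset.univ_inter, hinn]
    simp
  set D1 : G.Divisor := fun y => Du y - G.laplacian g y with hD1
  have hinn_nn : ∀ y, 0 ≤ inn y := fun y =>
    Finset.sum_nonneg fun w _ => Int.natCast_nonneg _
  have hD1eff : G.Effective D1 := by
    intro y
    by_cases hy : y ∈ A
    · rw [hD1]
      simp only
      rw [hlapgA y hy, ← hDuEq y hy]
      linarith [hDuEff y]
    · rw [hD1]
      simp only
      rw [hlapgnA y hy, hDuoffA y hy]
      have := hinn_nn y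
      linarith
  have hD1lin : G.LinEquiv D D1 := by
    refine ⟨f1 + g, ?_⟩
    rw [Multigraph.lap_add, ← hf1]
    funext y
    simp only [Pi.sub_apply, Pi.add_apply, hD1]
    ring
  have hD1v : 0 < D1 v := by
    rw [hD1]
    simp only
    rw [hlapgnA v hvA, hDuoffA v hvA]
    have hn : 0 < G.numEdges v u := Multigraph.numEdges_pos (by rw [he, Sym2.eq_swap])
    have hn' : (1:ℤ) ≤ (G.numEdges v u : ℤ) := by exact_mod_cast hn
    have hle : (G.numEdges v u : ℤ) ≤ inn v := by
      rw [hinn]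
      exact Finset.single_le_sum (fun w _ => Int.natCast_nonneg _) huA
    linarith
  have hD1Dw : D1 = Dw := hDvUnique v D1 hD1eff hD1lin hD1v
  have hDwOff : ∀ y, y ∉ A → Dw y = inn y := by
    intro y hy
    rw [← hD1Dw, hD1]
    simp only
    rw [hlapgnA y hy, hDuoffA y hy]
    ring
  -- conclude
  constructor
  · have hseteq : {e' : G.E | ∃ a b, G.ends e' = s(a, b) ∧ 0 < Du a ∧ 0 < Dw b}
        = {e' : G.E | p e'} := by
      ext e'
      constructor
      · rintro ⟨a, b, hab, ha, hb⟩
        have haA : a ∈ A := by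
          by_contra h
          rw [hDuoffA a h] at ha
          omega
        have hbA : b ∉ A := fun h => by
          rw [hDwA b h] at hb
          omega
        exact ⟨a, haA, b, Finset.mem_compl.mpr hbA, hab⟩
      · rintro ⟨a, ha, b, hb, hab⟩
        have hbA : b ∉ A := Finset.mem_compl.mp hb
        refine ⟨a, b, hab, ?_, ?_⟩
        · rw [hDuEq a ha]
          have h1 : 0 < G.numEdges a b := Multigraph.numEdges_pos hab
          have h1' : (1:ℤ) ≤ (G.numEdges a b : ℤ) := by exact_mod_cast h1
          have h2 : (G.numEdges a b : ℤ) ≤ out a := by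
            rw [hout]
            exact Finset.single_le_sum (fun w _ => Int.natCast_nonneg _) hb
          linarith
        · rw [hDwOff b hbA]
          have h1 : 0 < G.numEdges b a := Multigraph.numEdges_pos (by rw [hab, Sym2.eq_swap])
          have h1' : (1:ℤ) ≤ (G.numEdges b a : ℤ) := by exact_mod_cast h1
          have h2 : (G.numEdges b a : ℤ) ≤ inn b := by
            rw [hinn]
            exact Finset.single_le_sum (fun w _ => Int.natCast_nonneg _) ha
          linarith
    rw [hseteq]
    have : (({e' | p e'}.ncard : ℤ)) = 3 := by rw [hScast, hS3]
    exact_mod_cast this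
  · intro u' hu'
    have hu'A : u' ∈ A := by
      by_contra h
      rw [hDuoffA u' h] at hu'
      omega
    have hDvu' : Du = Dv u' := hDvUnique u' Du hDuEff ⟨f1, hf1⟩ hu'
    have hseteq : {e' : G.E | ∃ b, G.ends e' = s(u', b) ∧ 0 < Dw b}
        = {e' : G.E | ∃ b ∈ Aᶜ, G.ends e' = s(u', b)} := by
      ext e'
      constructor
      · rintro ⟨b, hab, hb⟩
        have hbA : b ∉ A := fun h => by
          rw [hDwA b h] at hb
          omega
        exact ⟨b, Finset.mem_compl.mpr hbA, hab⟩
      · rintro ⟨b, hb, hab⟩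
        have hbA : b ∉ A := Finset.mem_compl.mp hb
        refine ⟨b, hab, ?_⟩
        rw [hDwOff b hbA]
        have h1 : 0 < G.numEdges b u' := Multigraph.numEdges_pos (by rw [hab, Sym2.eq_swap])
        have h1' : (1:ℤ) ≤ (G.numEdges b u' : ℤ) := by exact_mod_cast h1
        have h2 : (G.numEdges b u' : ℤ) ≤ inn b := by
          rw [hinn]
          exact Finset.single_le_sum (fun w _ => Int.natCast_nonneg _) hu'A
        linarith
    have hu'nc : u' ∉ Aᶜ := by simp [hu'A]
    rw [hseteq, Multigraph.ncard_edges_to G u' Aᶜ hu'nc, ← hDvu', hDuEq u' hu'A, hout]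
    push_cast
    rfl
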